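/- Let 𝔽_{3,2} denote the 3-graph with vertex set {1,…,5} and edge set {123, 124, 125, 345}. Then 𝔽_{3,2} is weakly vertex-extendable with respect to the semibipartite pattern; explicitly: for every δ > 0 there exist N_0 and ζ > 0 such that for every 𝔽_{3,2}-free 3-graph H on n ≥ N_0 vertices with minimum degree δ(H) ≥ (4/9 − ζ)·C(n−1,2), if there is a vertex v of H such that H − v is semibipartite, then the degree of v in H satisfies d_H(v) ≤ (4/9 + δ)·C(n−1,2). -/

import Mathlib

open Filter

namespace DensityCH

/-- An `r`-uniform hypergraph with vertices in `ℕ`: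
a finite vertex set together with a set of `r`-element edges. -/
structure HGraph (r : ℕ) where
  verts : Finset ℕ
  edges : Finset (Finset ℕ)
  edges_sub : ∀ e ∈ edges, e ⊆ verts
  edges_card : ∀ e ∈ edges, e.card = r

namespace HGraph

/-- Build an `r`-graph from a vertex set and a set of candidate edges,
keeping exactly the well-formed candidates. -/
def ofEdges (r : ℕ) (V : Finset ℕ) (E : Finset (Finset ℕ)) : HGraph r where
  verts := V
  edges := E.filter fun e => e ⊆ V ∧ e.card = r
  edges_sub := fun e he => ((Finset.mem_filter.mp he).2).1
  edges_card := fun e he => ((Finset.mem_filter.mp he).2).2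

variable {r : ℕ}

/-- `H` contains a copy of `F`, i.e. a subgraph isomorphic to `F`. -/
def IsCopyIn (F H : HGraph r) : Prop :=
  ∃ f : ℕ → ℕ, Set.InjOn f ↑F.verts ∧ (∀ v ∈ F.verts, f v ∈ H.verts) ∧
    ∀ e ∈ F.edges, e.image f ∈ H.edges

/-- The subgraph of `H` induced on `S`. -/
def induce (H : HGraph r) (S : Finset ℕ) : HGraph r :=
  ofEdges r (H.verts ∩ S) (H.edges.filter fun e => e ⊆ S)

/-- Delete a vertex from `H`. -/
def deleteVert (H : HGraph r) (v : ℕ) : HGraph r :=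
  ofEdges r (H.verts.erase v) (H.edges.filter fun e => v ∉ e)

/-- The degree of a vertex. -/
def deg (H : HGraph r) (v : ℕ) : ℕ := (H.edges.filter fun e => v ∈ e).card

/-- The maximum degree `Δ(H)`. -/
def maxDeg (H : HGraph r) : ℕ := H.verts.sup H.deg

/-- The minimum degree `δ(H)`. -/
def minDeg (H : HGraph r) : ℕ :=
  if h : H.verts.Nonempty then H.verts.inf' h H.deg else 0

/-- The average degree `d(H) = r·|E(H)|/|V(H)|`. -/
noncomputable def avgDeg (H : HGraph r) : ℝ :=
  (r : ℝ) * (H.edges.card : ℝ) / (H.verts.card : ℝ)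

/-- `H` contains `k` pairwise vertex-disjoint copies of `F`, i.e. `ν(F,H) ≥ k`. -/
def HasMatching (F H : HGraph r) (k : ℕ) : Prop :=
  ∃ S : Fin k → Finset ℕ,
    (∀ i, S i ⊆ H.verts ∧ (S i).card = F.verts.card) ∧
    (∀ i j, i ≠ j → Disjoint (S i) (S j)) ∧
    ∀ i, F.IsCopyIn (H.induce (S i))

/-- Isomorphism of hypergraphs. -/
def Iso (G H : HGraph r) : Prop :=
  ∃ f : ℕ → ℕ, Set.BijOn f ↑G.verts ↑H.verts ∧
    ∀ e ∈ Finset.powersetCard r G.verts, (e ∈ G.edges ↔ e.image f ∈ H.edges)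

/-- The join `G ⋈ H`: all edges of `G`, all edges of `H`, and all `r`-sets meeting
both vertex sets. -/
def join (G H : HGraph r) : HGraph r :=
  ofEdges r (G.verts ∪ H.verts)
    (G.edges ∪ H.edges ∪ ((Finset.powersetCard r (G.verts ∪ H.verts)).filter
      fun e => (e ∩ G.verts).Nonempty ∧ (e ∩ H.verts).Nonempty))

end HGraph

/-- The complete `r`-graph on a vertex set `S`. -/
def completeOn (r : ℕ) (S : Finset ℕ) : HGraph r :=
  HGraph.ofEdges r S (Finset.powersetCard r S)

/-- The `r`-graph on `V` with no edges. -/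
def emptyOn (r : ℕ) (V : Finset ℕ) : HGraph r := HGraph.ofEdges r V ∅

/-- The Turán number `ex(n,F)`. -/
noncomputable def exN (r n : ℕ) (F : HGraph r) : ℕ :=
  sSup {m | ∃ H : HGraph r, H.verts.card = n ∧ ¬ F.IsCopyIn H ∧ H.edges.card = m}

/-- `d(n,F) = r·ex(n,F)/n`. -/
noncomputable def dN (r n : ℕ) (F : HGraph r) : ℝ := (r : ℝ) * (exN r n F : ℝ) / (n : ℝ)

/-- `δ(n,F) = ex(n,F) − ex(n−1,F)` (as a real number). -/
noncomputable def deltaN (r n : ℕ) (F : HGraph r) : ℝ := (exN r n F : ℝ) - (exN r (n-1) F : ℝ)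

/-- `x` is the Turán density `π(F)`, i.e. the limit of `ex(n,F)/C(n,r)`. -/
def HasTuranDensity (r : ℕ) (F : HGraph r) (x : ℝ) : Prop :=
  Tendsto (fun n : ℕ => (exN r n F : ℝ) / (n.choose r : ℝ)) atTop (nhds x)

/-- `ex(n,(t+1)F)`: the maximum number of edges of an `n`-vertex `r`-graph with no
`t+1` pairwise vertex-disjoint copies of `F`. -/
noncomputable def exMatchN (r n t : ℕ) (F : HGraph r) : ℕ :=
  sSup {m | ∃ H : HGraph r, H.verts.card = n ∧ ¬ F.HasMatching H (t+1) ∧ H.edges.card = m}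

/-- `H ∈ EX(n,F)`. -/
def IsExtremalFree (r n : ℕ) (F H : HGraph r) : Prop :=
  H.verts.card = n ∧ ¬ F.IsCopyIn H ∧ H.edges.card = exN r n F

/-- `H ∈ EX(n,(t+1)F)`. -/
def IsExtremalMatchingFree (r n t : ℕ) (F H : HGraph r) : Prop :=
  H.verts.card = n ∧ ¬ F.HasMatching H (t+1) ∧ H.edges.card = exMatchN r n t F

/-- `F` is `(f1, f2)`-bounded at `n`. -/
def BoundedAt (r n : ℕ) (F : HGraph r) (f1 f2 : ℝ) : Prop :=
  ∀ H : HGraph r, H.verts.card = n → ¬ F.IsCopyIn H →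
    dN r n F - f1 ≤ H.avgDeg → (H.maxDeg : ℝ) ≤ dN r n F + f2

/-- `ex(·,F)` is `g`-smooth at `n`: `|δ(n,F) − d(n−1,F)| ≤ g(n)`. -/
def SmoothAt (r n : ℕ) (F : HGraph r) (g : ℝ) : Prop :=
  |deltaN r n F - dN r (n-1) F| ≤ g

/-- The collection `H 0, …, H t` (on a common vertex set) has a rainbow `F`-matching. -/
def HasRainbowMatching (r t : ℕ) (F : HGraph r) (H : Fin (t+1) → HGraph r) : Prop :=
  ∃ S : Fin (t+1) → Finset ℕ,
    (∀ i, S i ⊆ (H i).verts ∧ (S i).card = F.verts.card) ∧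
    (∀ i j, i ≠ j → Disjoint (S i) (S j)) ∧
    ∀ i, F.IsCopyIn ((H i).induce (S i))

/-!  Patterns -/

/-- An `r`-uniform pattern: a finite index set together with a collection of
`r`-multisets on it. -/
structure Pattern (r : ℕ) where
  idx : Finset ℕ
  mE : Finset (Multiset ℕ)
  card_eq : ∀ s ∈ mE, Multiset.card s = r
  mem_idx : ∀ s ∈ mE, ∀ i ∈ s, i ∈ idx

namespace Pattern

variable {r : ℕ}

/-- The pattern `P − i`. -/
def erase (P : Pattern r) (i : ℕ) : Pattern r where
  idx := P.idx.erase i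
  mE := P.mE.filter fun s => i ∉ s
  card_eq := fun s hs => P.card_eq s (Finset.mem_filter.mp hs).1
  mem_idx := by
    intro s hs j hj
    have h1 := Finset.mem_filter.mp hs
    refine Finset.mem_erase.mpr ⟨?_, P.mem_idx s h1.1 j hj⟩
    rintro rfl
    exact h1.2 hj

/-- `H` is a `P`-construction: a blowup of the pattern `P`. -/
def IsConstruction (P : Pattern r) (H : HGraph r) : Prop :=
  ∃ part : ℕ → ℕ, (∀ v ∈ H.verts, part v ∈ P.idx) ∧
    ∀ e : Finset ℕ, e ∈ H.edges ↔ (e ⊆ H.verts ∧ e.card = r ∧ Multiset.map part e.val ∈ P.mE)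

/-- `H` is a `P`-subconstruction: a subgraph of a `P`-construction. -/
def IsSubconstruction (P : Pattern r) (H : HGraph r) : Prop :=
  ∃ G : HGraph r, P.IsConstruction G ∧ H.verts ⊆ G.verts ∧ H.edges ⊆ G.edges

end Pattern

/-- `Λ(P,n)`: the maximum number of edges of an `n`-vertex `P`-construction. -/
noncomputable def patEx (r : ℕ) (P : Pattern r) (n : ℕ) : ℕ :=
  sSup {m | ∃ H : HGraph r, P.IsConstruction H ∧ H.verts.card = n ∧ H.edges.card = m}

/-- The Lagrangian `λ(P) = lim Λ(P,n)/C(n,r)`. -/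
noncomputable def patLagrangian (r : ℕ) (P : Pattern r) : ℝ :=
  limUnder atTop fun n : ℕ => (patEx r P n : ℝ) / (n.choose r : ℝ)

/-- The pattern `P` is minimal: `λ(P−i) < λ(P)` for all `i`. -/
def Pattern.Minimal {r : ℕ} (P : Pattern r) : Prop :=
  ∀ i ∈ P.idx, patLagrangian r (P.erase i) < patLagrangian r P

/-- `(F,P)` is a Turán pair. -/
def IsTuranPair (r : ℕ) (F : HGraph r) (P : Pattern r) : Prop :=
  (∀ H : HGraph r, P.IsConstruction H → ¬ F.IsCopyIn H) ∧
  (∀ H : HGraph r, ¬ F.IsCopyIn H → H.edges.card = exN r H.verts.card F →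
    P.IsConstruction H)

/-- `F` is edge-stable with respect to `P` (with Turán density `π`). -/
def EdgeStable (r : ℕ) (F : HGraph r) (P : Pattern r) (π : ℝ) : Prop :=
  ∀ δ : ℝ, 0 < δ → ∃ N₀ : ℕ, ∃ ζ : ℝ, 0 < ζ ∧
    ∀ H : HGraph r, N₀ ≤ H.verts.card → ¬ F.IsCopyIn H →
      (π - ζ) * (H.verts.card.choose r : ℝ) ≤ (H.edges.card : ℝ) →
      ∃ H' : HGraph r, H'.verts ⊆ H.verts ∧ H'.edges ⊆ H.edges ∧
        (π - δ) * (H.verts.card.choose r : ℝ) ≤ (H'.edges.card : ℝ) ∧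
        P.IsSubconstruction H'

/-- `F` is weakly vertex-extendable with respect to `P` (with Turán density `π`). -/
def WeaklyVertexExtendable (r : ℕ) (F : HGraph r) (P : Pattern r) (π : ℝ) : Prop :=
  ∀ δ : ℝ, 0 < δ → ∃ N₀ : ℕ, ∃ ζ : ℝ, 0 < ζ ∧
    ∀ H : HGraph r, N₀ ≤ H.verts.card → ¬ F.IsCopyIn H →
      (π - ζ) * (((H.verts.card - 1).choose (r-1) : ℕ) : ℝ) ≤ (H.minDeg : ℝ) →
      ∀ v ∈ H.verts, P.IsSubconstruction (H.deleteVert v) →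
        (H.deg v : ℝ) ≤ (π + δ) * (((H.verts.card - 1).choose (r-1) : ℕ) : ℝ)

/-- `F` is degree-stable with respect to `P` (with Turán density `π`). -/
def DegreeStable (r : ℕ) (F : HGraph r) (P : Pattern r) (π : ℝ) : Prop :=
  ∃ ζ : ℝ, 0 < ζ ∧ ∃ N₀ : ℕ,
    ∀ H : HGraph r, N₀ ≤ H.verts.card → ¬ F.IsCopyIn H →
      (π - ζ) * (((H.verts.card - 1).choose (r-1) : ℕ) : ℝ) ≤ (H.minDeg : ℝ) →
      P.IsSubconstruction H

/-!  Concrete constructions -/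

/-- The generalized Turán graph `T_r(·,ℓ)` on vertex set `V` (parts are residue
classes mod `ℓ`; on an interval these are balanced). -/
def turanOn (r ℓ : ℕ) (V : Finset ℕ) : HGraph r :=
  HGraph.ofEdges r V ((Finset.powersetCard r V).filter
    fun e => ∀ u ∈ e, ∀ v ∈ e, u % ℓ = v % ℓ → u = v)

/-- The `r`-graph on `V₁ ∪ V₂` whose edges are all `r`-sets meeting both parts. -/
def crossOn (r : ℕ) (V₁ V₂ : Finset ℕ) : HGraph r :=
  HGraph.ofEdges r (V₁ ∪ V₂) ((Finset.powersetCard r (V₁ ∪ V₂)).filter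
    fun e => (e ∩ V₁).Nonempty ∧ (e ∩ V₂).Nonempty)

/-- The `r`-graph on `V₁ ∪ V₂` whose edges are all `r`-sets meeting `V₁` in an odd
number of vertices. -/
def oddCross (r : ℕ) (V₁ V₂ : Finset ℕ) : HGraph r :=
  HGraph.ofEdges r (V₁ ∪ V₂) ((Finset.powersetCard r (V₁ ∪ V₂)).filter
    fun e => Odd (e ∩ V₁).card)

/-- The Fano plane. -/
def fano : HGraph 3 :=
  HGraph.ofEdges 3 (Finset.Icc 1 7)
    {({1,2,3} : Finset ℕ), {3,4,5}, {5,6,1}, {1,7,4}, {2,7,5}, {3,7,6}, {2,4,6}}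

/-- The generalized triangle `𝕋_r`, with edges `{1,…,r}`, `{1,…,r−1,r+1}` and
`{r,…,2r−1}`. -/
def genTri (r : ℕ) : HGraph r :=
  HGraph.ofEdges r (Finset.Icc 1 (2*r - 1))
    {Finset.Icc 1 r, Finset.Icc 1 (r-1) ∪ {r+1}, Finset.Icc r (2*r - 1)}

/-- `G` is a blowup of the `r`-graph `W` (viewing `W` as a pattern). -/
def IsBlowupOf {r : ℕ} (W G : HGraph r) : Prop :=
  ∃ part : ℕ → ℕ, (∀ v ∈ G.verts, part v ∈ W.verts) ∧
    ∀ e : Finset ℕ, e ∈ G.edges ↔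
      (e ⊆ G.verts ∧ e.card = r ∧ ∃ f ∈ W.edges, Multiset.map part e.val = f.val)

/-- The expansion `H^F` of an `r`-graph `F`: for every pair of vertices not covered
by an edge of `F`, add an edge consisting of this pair plus `r−2` new vertices,
these sets of new vertices being pairwise disjoint. -/
def HGraph.expansion {r : ℕ} (F : HGraph r) : HGraph r :=
  HGraph.ofEdges r
    (F.verts ∪ (((F.verts ×ˢ F.verts).filter fun p =>
        p.1 < p.2 ∧ ∀ e ∈ F.edges, ¬ (p.1 ∈ e ∧ p.2 ∈ e)).biUnion fun p =>
      (Finset.range (r-2)).image fun s =>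
        (F.verts.sup id + 1) + (p.1 * (F.verts.sup id + 1) + p.2) * r + s))
    (F.edges ∪ (((F.verts ×ˢ F.verts).filter fun p =>
        p.1 < p.2 ∧ ∀ e ∈ F.edges, ¬ (p.1 ∈ e ∧ p.2 ∈ e)).image fun p =>
      insert p.1 (insert p.2 ((Finset.range (r-2)).image fun s =>
        (F.verts.sup id + 1) + (p.1 * (F.verts.sup id + 1) + p.2) * r + s))))

/-- A `2`-graph is a tree on `k` vertices: `k` vertices, `k−1` edges, connected. -/
def IsTreeGraph (k : ℕ) (T : HGraph 2) : Prop :=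
  T.verts.card = k ∧ T.edges.card = k - 1 ∧
  ∀ S : Finset ℕ, S ⊆ T.verts → S.Nonempty → S ≠ T.verts →
    ∃ e ∈ T.edges, (e ∩ S).Nonempty ∧ (e \ S).Nonempty

/-- `T` satisfies the Erdős–Sós property for `k`: every graph with average degree
greater than `k−2` contains `T`. -/
def ErdosSos (k : ℕ) (T : HGraph 2) : Prop :=
  ∀ G : HGraph 2, ((k : ℝ) - 2) * (G.verts.card : ℝ) < 2 * (G.edges.card : ℝ) →
    T.IsCopyIn G

/-- The `(r−2)`-expansion `Exp(T)` of a `2`-graph `T`: enlarge every edge by one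
common fixed set of `r−2` new vertices. -/
def expTree (r : ℕ) (T : HGraph 2) : HGraph r :=
  HGraph.ofEdges r
    (T.verts ∪ ((Finset.range (r-2)).image fun s => T.verts.sup id + 1 + s))
    (T.edges.image fun e =>
      e ∪ ((Finset.range (r-2)).image fun s => T.verts.sup id + 1 + s))

/-- The chromatic number of a `2`-graph. -/
noncomputable def chrom (F : HGraph 2) : ℕ :=
  sInf {k | ∃ c : ℕ → ℕ, (∀ v ∈ F.verts, c v < k) ∧
    ∀ e ∈ F.edges, ∀ u ∈ e, ∀ v ∈ e, u ≠ v → c u ≠ c v}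

/-- A graph is edge-critical if deleting some edge lowers its chromatic number. -/
def EdgeCritical (F : HGraph 2) : Prop :=
  ∃ e ∈ F.edges, chrom (HGraph.ofEdges 2 F.verts (F.edges.erase e)) < chrom F

/-- `H` is semibipartite: the vertex set splits into `V₁ ∪ V₂` so that every edge
has exactly one vertex in `V₁`. -/
def Semibipartite (r : ℕ) (H : HGraph r) : Prop :=
  ∃ V₁ ⊆ H.verts, ∀ e ∈ H.edges, (e ∩ V₁).card = 1

/-- `H` is a `K_ℓ^r`-subconstruction, i.e. an `ℓ`-partite `r`-graph. -/
def IsKlSub (r ℓ : ℕ) (H : HGraph r) : Prop :=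
  ∃ f : ℕ → ℕ, (∀ v ∈ H.verts, f v < ℓ) ∧
    ∀ e ∈ H.edges, ∀ u ∈ e, ∀ v ∈ e, f u = f v → u = v

/-- The Lagrangian `λ(W)` of an `r`-graph `W`, viewing `W` as a pattern. -/
noncomputable def hgLagrangian (r : ℕ) (W : HGraph r) : ℝ :=
  limUnder atTop fun n : ℕ =>
    ((sSup {m | ∃ G : HGraph r, IsBlowupOf W G ∧ G.verts.card = n ∧ G.edges.card = m} : ℕ) : ℝ)
      / (n.choose r : ℝ)

/-- The `r`-graph `B(r,ℓ+1)`. -/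
def BGraph (r ℓ : ℕ) : HGraph r :=
  HGraph.ofEdges r (Finset.Icc 1 (ℓ+1))
    (insert (Finset.Icc 1 r)
      ((Finset.powersetCard r (Finset.Icc 2 (ℓ+1))).filter
        fun e => (e ∩ Finset.Icc 2 r).card ≤ 1))

/-- The `r`-uniform matching of size two, `M_2^r`. -/
def matching2 (r : ℕ) : HGraph r :=
  HGraph.ofEdges r (Finset.Icc 1 (2*r)) {Finset.Icc 1 r, Finset.Icc (r+1) (2*r)}

/-- The expanded triangle `𝓒_3^{2r}`. -/
def expandedTriangle (r : ℕ) : HGraph (2*r) :=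
  HGraph.ofEdges (2*r) (Finset.Icc 1 (3*r))
    {Finset.Icc 1 (2*r), Finset.Icc (r+1) (3*r), Finset.Icc 1 r ∪ Finset.Icc (2*r+1) (3*r)}

/-- The `4`-graph `𝔽_{4,3}`. -/
def F43 : HGraph 4 :=
  HGraph.ofEdges 4 (Finset.Icc 1 7)
    {({1,2,3,4} : Finset ℕ), {1,2,3,5}, {1,2,3,6}, {1,2,3,7}, {4,5,6,7}}

/-- The `3`-graph `𝔽_{3,2}`. -/
def F32 : HGraph 3 :=
  HGraph.ofEdges 3 (Finset.Icc 1 5)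
    {({1,2,3} : Finset ℕ), {1,2,4}, {1,2,5}, {3,4,5}}

/-- `H` contains pairwise vertex-disjoint copies of `F i`, `ts i` many of each. -/
def HasMixedMatching (r k : ℕ) (F : Fin k → HGraph r) (ts : Fin k → ℕ)
    (H : HGraph r) : Prop :=
  ∃ S : (i : Fin k) → Fin (ts i) → Finset ℕ,
    (∀ i j, S i j ⊆ H.verts ∧ (S i j).card = (F i).verts.card) ∧
    (∀ p q : Σ i : Fin k, Fin (ts i), p ≠ q → Disjoint (S p.1 p.2) (S q.1 q.2)) ∧
    ∀ i j, (F i).IsCopyIn (H.induce (S i j))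

/-- `ex(n, ⊔ᵢ tᵢ Fᵢ)`. -/
noncomputable def exMixedN (r k : ℕ) (F : Fin k → HGraph r) (ts : Fin k → ℕ)
    (n : ℕ) : ℕ :=
  sSup {m | ∃ H : HGraph r, H.verts.card = n ∧ ¬ HasMixedMatching r k F ts H ∧
    H.edges.card = m}

/-- `ex(n, {F₁,…,F_k})`. -/
noncomputable def exFamN (r k : ℕ) (F : Fin k → HGraph r) (n : ℕ) : ℕ :=
  sSup {m | ∃ H : HGraph r, H.verts.card = n ∧ (∀ i, ¬ (F i).IsCopyIn H) ∧
    H.edges.card = m}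

open Finset

lemma f32_copy (H : HGraph 3) (u1 u2 u3 u4 u5 : ℕ)
    (d12 : u1 ≠ u2) (d13 : u1 ≠ u3) (d14 : u1 ≠ u4) (d15 : u1 ≠ u5)
    (d23 : u2 ≠ u3) (d24 : u2 ≠ u4) (d25 : u2 ≠ u5)
    (d34 : u3 ≠ u4) (d35 : u3 ≠ u5) (d45 : u4 ≠ u5)
    (e3 : ({u1, u2, u3} : Finset ℕ) ∈ H.edges)
    (e4 : ({u1, u2, u4} : Finset ℕ) ∈ H.edges)
    (e5 : ({u1, u2, u5} : Finset ℕ) ∈ H.edges)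
    (e345 : ({u3, u4, u5} : Finset ℕ) ∈ H.edges) :
    F32.IsCopyIn H := by
  have hv1 : u1 ∈ H.verts := H.edges_sub _ e3 (by simp)
  have hv2 : u2 ∈ H.verts := H.edges_sub _ e3 (by simp)
  have hv3 : u3 ∈ H.verts := H.edges_sub _ e3 (by simp)
  have hv4 : u4 ∈ H.verts := H.edges_sub _ e4 (by simp)
  have hv5 : u5 ∈ H.verts := H.edges_sub _ e5 (by simp)
  refine ⟨fun i => if i = 1 then u1 else if i = 2 then u2 else if i = 3 then u3
    else if i = 4 then u4 else u5, ?_, ?_, ?_⟩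
  · intro x hx y hy h
    have hx' : x ∈ Finset.Icc 1 5 := hx
    have hy' : y ∈ Finset.Icc 1 5 := hy
    simp only [Finset.mem_Icc] at hx' hy'
    obtain ⟨hx1, hx2⟩ := hx'
    obtain ⟨hy1, hy2⟩ := hy'
    interval_cases x <;> interval_cases y <;> norm_num at h <;> simp_all
  · intro x hx
    have hx' : x ∈ Finset.Icc 1 5 := hx
    simp only [Finset.mem_Icc] at hx'
    obtain ⟨hx1, hx2⟩ := hx'
    interval_cases x <;> norm_num <;> assumption
  · have hE : F32.edges = {({1,2,3} : Finset ℕ), {1,2,4}, {1,2,5}, {3,4,5}} := by decide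
    intro e he
    rw [hE] at he
    simp only [Finset.mem_insert, Finset.mem_singleton] at he
    rcases he with rfl | rfl | rfl | rfl <;>
      · simp only [Finset.image_insert, Finset.image_singleton]
        norm_num
        assumption

open Finset

lemma cl_star (H : HGraph 3) (v : ℕ) (hF : ¬ F32.IsCopyIn H)
    (r s : Finset ℕ) (hr2 : r.card = 2) (hs2 : s.card = 2)
    (hrv : v ∉ r) (hsv : v ∉ s) (hd : Disjoint r s)
    (hre : insert v r ∈ H.edges) (hse : insert v s ∈ H.edges)
    (hxs : ∀ x ∈ s, insert x r ∈ H.edges) : False := by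
  obtain ⟨p, q, hpq, rfl⟩ := Finset.card_eq_two.mp hr2
  obtain ⟨x, y, hxy, rfl⟩ := Finset.card_eq_two.mp hs2
  simp only [Finset.mem_insert, Finset.mem_singleton, not_or] at hrv hsv
  have hpx : p ∉ ({x, y} : Finset ℕ) := Finset.disjoint_left.mp hd (by simp)
  have hqx : q ∉ ({x, y} : Finset ℕ) := Finset.disjoint_left.mp hd (by simp)
  simp only [Finset.mem_insert, Finset.mem_singleton, not_or] at hpx hqx
  apply hF
  have h1 : ({p, q, v} : Finset ℕ) = insert v {p, q} := by ext a; simp; tauto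
  have h2 : ({p, q, x} : Finset ℕ) = insert x {p, q} := by ext a; simp; tauto
  have h3 : ({p, q, y} : Finset ℕ) = insert y {p, q} := by ext a; simp; tauto
  refine f32_copy H p q v x y hpq (fun h => hrv.1 h.symm) hpx.1 hpx.2
    (fun h => hrv.2 h.symm) hqx.1 hqx.2 hsv.1 hsv.2 hxy
    (by rw [h1]; exact hre) (by rw [h2]; exact hxs x (by simp))
    (by rw [h3]; exact hxs y (by simp)) hse

lemma count_uv (H : HGraph 3) (u v : ℕ) (huv : u ≠ v) :
    (H.edges.filter fun e => u ∈ e ∧ v ∈ e).card ≤ H.verts.card := by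
  have h := Finset.card_le_card_of_injOn (f := fun e => e \ {u, v})
    (s := H.edges.filter fun e => u ∈ e ∧ v ∈ e) (t := H.verts.powersetCard 1) ?_ ?_
  · simpa [Finset.card_powersetCard] using h
  · intro e he
    simp only [Finset.mem_coe, Finset.mem_filter] at he ⊢
    obtain ⟨he, hu, hv⟩ := he
    have hsub : ({u, v} : Finset ℕ) ⊆ e := by
      intro t ht; simp only [Finset.mem_insert, Finset.mem_singleton] at ht
      rcases ht with rfl | rfl <;> assumption
    rw [Finset.mem_powersetCard]
    refine ⟨(Finset.sdiff_subset).trans (H.edges_sub e he), ?_⟩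
    rw [Finset.card_sdiff_of_subset hsub, H.edges_card e he,
      Finset.card_insert_of_notMem (by simp [huv]), Finset.card_singleton]
  · intro e1 h1 e2 h2 h
    simp only [Finset.coe_filter, Set.mem_setOf_eq] at h1 h2
    have h' : e1 \ {u, v} = e2 \ {u, v} := h
    have s1 : ({u, v} : Finset ℕ) ⊆ e1 := by
      intro t ht; simp only [Finset.mem_insert, Finset.mem_singleton] at ht
      rcases ht with rfl | rfl; exacts [h1.2.1, h1.2.2]
    have s2 : ({u, v} : Finset ℕ) ⊆ e2 := by
      intro t ht; simp only [Finset.mem_insert, Finset.mem_singleton] at ht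
      rcases ht with rfl | rfl; exacts [h2.2.1, h2.2.2]
    calc e1 = e1 \ {u, v} ∪ {u, v} := (Finset.sdiff_union_of_subset s1).symm
    _ = e2 \ {u, v} ∪ {u, v} := by rw [h']
    _ = e2 := Finset.sdiff_union_of_subset s2

lemma pair_filter_card (P : Finset (Finset ℕ)) (x : ℕ) (T : Finset ℕ)
    (h : ∀ p ∈ P, x ∈ p → p.card = 2 ∧ p ⊆ insert x T) :
    (P.filter fun p => x ∈ p).card ≤ T.card := by
  have h2 := Finset.card_le_card_of_injOn (f := fun p => p.erase x)
    (s := P.filter fun p => x ∈ p) (t := T.powersetCard 1) ?_ ?_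
  · simpa [Finset.card_powersetCard] using h2
  · intro p hp
    simp only [Finset.mem_coe, Finset.mem_filter] at hp ⊢
    obtain ⟨hc, hsub⟩ := h p hp.1 hp.2
    rw [Finset.mem_powersetCard]
    constructor
    · intro t ht
      have h1 := Finset.mem_of_mem_erase ht
      have hne := Finset.ne_of_mem_erase ht
      have h3 := hsub h1
      simp only [Finset.mem_insert] at h3
      tauto
    · rw [Finset.card_erase_of_mem hp.2, hc]
  · intro p1 h1 p2 h2 hh
    simp only [Finset.coe_filter, Set.mem_setOf_eq] at h1 h2
    have hh' : p1.erase x = p2.erase x := hh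
    rw [← Finset.insert_erase h1.2, ← Finset.insert_erase h2.2, hh']

lemma touch_card (P : Finset (Finset ℕ)) (S T : Finset ℕ)
    (h : ∀ p ∈ P, p.card = 2 ∧ p ⊆ T) :
    (P.filter fun p => ¬ Disjoint p S).card ≤ S.card * T.card := by
  have hsub : P.filter (fun p => ¬ Disjoint p S) ⊆ S.biUnion fun x => P.filter fun p => x ∈ p := by
    intro p hp
    simp only [Finset.mem_filter] at hp
    obtain ⟨a, ha, haS⟩ := Finset.not_disjoint_iff.mp hp.2
    exact Finset.mem_biUnion.mpr ⟨a, haS, Finset.mem_filter.mpr ⟨hp.1, ha⟩⟩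
  calc (P.filter fun p => ¬ Disjoint p S).card
      ≤ (S.biUnion fun x => P.filter fun p => x ∈ p).card := Finset.card_le_card hsub
    _ ≤ ∑ x ∈ S, (P.filter fun p => x ∈ p).card := Finset.card_biUnion_le
    _ ≤ ∑ _x ∈ S, T.card := Finset.sum_le_sum fun x _ =>
        pair_filter_card P x T fun p hp _ => ⟨(h p hp).1, (h p hp).2.trans (Finset.subset_insert _ _)⟩
    _ = S.card * T.card := by rw [Finset.sum_const, smul_eq_mul]

lemma prod_filter_card {α β : Type*} [DecidableEq α] [DecidableEq β]
    (s : Finset α) (t : Finset β) (P : α → β → Prop) [∀ a b, Decidable (P a b)] :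
    ((s ×ˢ t).filter fun z => P z.1 z.2).card = ∑ x ∈ s, (t.filter fun y => P x y).card := by
  simp only [Finset.card_filter]
  rw [Finset.sum_product]

lemma prod_filter_card' {α β : Type*} [DecidableEq α] [DecidableEq β]
    (s : Finset α) (t : Finset β) (P : α → β → Prop) [∀ a b, Decidable (P a b)] :
    ((s ×ˢ t).filter fun z => P z.1 z.2).card = ∑ y ∈ t, (s.filter fun x => P x y).card := by
  simp only [Finset.card_filter]
  rw [Finset.sum_product, Finset.sum_comm]

lemma deg_link_card (H : HGraph 3) (v : ℕ) :
    H.deg v = (((H.verts.erase v).powersetCard 2).filter fun p => insert v p ∈ H.edges).card := by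
  refine Finset.card_bij' (fun e _ => e.erase v) (fun p _ => insert v p) ?_ ?_ ?_ ?_
  · intro e he
    simp only [Finset.mem_filter] at he
    rw [Finset.mem_filter, Finset.mem_powersetCard]
    refine ⟨⟨Finset.erase_subset_erase v (H.edges_sub e he.1), ?_⟩, ?_⟩
    · rw [Finset.card_erase_of_mem he.2, H.edges_card e he.1]
    · rw [Finset.insert_erase he.2]; exact he.1
  · intro p hp
    simp only [Finset.mem_filter, Finset.mem_powersetCard] at hp
    rw [Finset.mem_filter]
    exact ⟨hp.2, Finset.mem_insert_self v p⟩
  · intro e he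
    simp only [Finset.mem_filter] at he
    exact Finset.insert_erase he.2
  · intro p hp
    simp only [Finset.mem_filter, Finset.mem_powersetCard] at hp
    exact Finset.erase_insert (fun hvp => (Finset.mem_erase.mp (hp.1.1 hvp)).1 rfl)

lemma del_edges (H : HGraph 3) (v : ℕ) :
    (H.deleteVert v).edges = H.edges.filter fun e => v ∉ e := by
  ext e
  simp only [HGraph.deleteVert, HGraph.ofEdges, Finset.mem_filter]
  constructor
  · rintro ⟨⟨h1, h2⟩, -⟩; exact ⟨h1, h2⟩
  · rintro ⟨h1, h2⟩
    exact ⟨⟨h1, h2⟩, Finset.subset_erase.mpr ⟨H.edges_sub e h1, h2⟩, H.edges_card e h1⟩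
lemma eV1_singleton (H : HGraph 3) (v : ℕ) (V1 : Finset ℕ)
    (hE : ∀ e ∈ H.edges, v ∉ e → (e ∩ V1).card = 1)
    {e : Finset ℕ} (he : e ∈ H.edges) (hv : v ∉ e) {w : ℕ} (hwe : w ∈ e) (hwV : w ∈ V1) :
    e ∩ V1 = {w} := by
  obtain ⟨z, hz⟩ := Finset.card_eq_one.mp (hE e he hv)
  have : w ∈ ({z} : Finset ℕ) := hz ▸ Finset.mem_inter.mpr ⟨hwe, hwV⟩
  rw [Finset.mem_singleton] at this
  rw [hz, this]

lemma count_w (H : HGraph 3) (v : ℕ) (V1 V2 : Finset ℕ)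
    (hV1 : V1 ⊆ H.verts.erase v) (hV2 : V2 = H.verts.erase v \ V1)
    (hE : ∀ e ∈ H.edges, v ∉ e → (e ∩ V1).card = 1)
    (w : ℕ) (hw : w ∈ V1) :
    (H.edges.filter fun e => w ∈ e ∧ v ∉ e).card
      = ((V2.powersetCard 2).filter fun p => insert w p ∈ H.edges).card := by
  have hwv : w ≠ v := (Finset.mem_erase.mp (hV1 hw)).1
  have hV2sub : ∀ t ∈ V2, t ∈ H.verts.erase v ∧ t ∉ V1 := by
    intro t ht; rw [hV2, Finset.mem_sdiff] at ht; exact ht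
  refine Finset.card_bij' (fun e _ => e.erase w) (fun p _ => insert w p) ?_ ?_ ?_ ?_
  · intro e he
    simp only [Finset.mem_filter] at he
    obtain ⟨he, hwe, hve⟩ := he
    have hsing := eV1_singleton H v V1 hE he hve hwe hw
    rw [Finset.mem_filter, Finset.mem_powersetCard]
    refine ⟨⟨?_, ?_⟩, ?_⟩
    · intro t ht
      rw [Finset.mem_erase] at ht
      have hte : t ∈ e := ht.2
      have htV1 : t ∉ V1 := by
        intro hc
        have : t ∈ ({w} : Finset ℕ) := hsing ▸ Finset.mem_inter.mpr ⟨hte, hc⟩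
        exact ht.1 (Finset.mem_singleton.mp this)
      rw [hV2, Finset.mem_sdiff, Finset.mem_erase]
      exact ⟨⟨fun h => hve (h ▸ hte), H.edges_sub e he hte⟩, htV1⟩
    · rw [Finset.card_erase_of_mem hwe, H.edges_card e he]
    · rw [Finset.insert_erase hwe]; exact he
  · intro p hp
    simp only [Finset.mem_filter, Finset.mem_powersetCard] at hp
    rw [Finset.mem_filter]
    refine ⟨hp.2, Finset.mem_insert_self w p, ?_⟩
    simp only [Finset.mem_insert, not_or]
    exact ⟨fun h => hwv h.symm, fun hc => (Finset.mem_erase.mp (hV2sub v (hp.1.1 hc)).1).1 rfl⟩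
  · intro e he
    simp only [Finset.mem_filter] at he
    exact Finset.insert_erase he.2.1
  · intro p hp
    simp only [Finset.mem_filter, Finset.mem_powersetCard] at hp
    exact Finset.erase_insert (fun hc => (hV2sub w (hp.1.1 hc)).2 hw)

lemma count_u (H : HGraph 3) (v : ℕ) (V1 V2 : Finset ℕ)
    (hV1 : V1 ⊆ H.verts.erase v) (hV2 : V2 = H.verts.erase v \ V1)
    (hE : ∀ e ∈ H.edges, v ∉ e → (e ∩ V1).card = 1)
    (u : ℕ) (hu : u ∈ V2) :
    (H.edges.filter fun e => u ∈ e ∧ v ∉ e).card ≤ V1.card * V2.card := by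
  have huV1 : u ∉ V1 := by rw [hV2, Finset.mem_sdiff] at hu; exact hu.2
  have key : ∀ e ∈ H.edges.filter fun e => u ∈ e ∧ v ∉ e,
      e = (e ∩ V1) ∪ insert u (e \ insert u (e ∩ V1)) := by
    intro e he
    simp only [Finset.mem_filter] at he
    obtain ⟨-, hue, -⟩ := he
    ext t
    simp only [Finset.mem_union, Finset.mem_inter, Finset.mem_insert, Finset.mem_sdiff,
      Finset.mem_inter]
    constructor
    · intro ht
      by_cases h1 : t ∈ V1
      · exact Or.inl ⟨ht, h1⟩
      · by_cases h2 : t = u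
        · exact Or.inr (Or.inl h2)
        · refine Or.inr (Or.inr ⟨ht, ?_⟩)
          rintro (rfl | ⟨-, hV⟩)
          exacts [h2 rfl, h1 hV]
    · rintro (⟨h, -⟩ | rfl | ⟨h, -⟩)
      · exact h
      · exact hue
      · exact h
  have h := Finset.card_le_card_of_injOn
    (f := fun e => ((e ∩ V1 : Finset ℕ), (e \ insert u (e ∩ V1) : Finset ℕ)))
    (s := H.edges.filter fun e => u ∈ e ∧ v ∉ e)
    (t := (V1.powersetCard 1) ×ˢ (V2.powersetCard 1)) ?_ ?_
  · simpa [Finset.card_powersetCard] using h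
  · intro e he
    have hrec := key e he
    simp only [Finset.mem_coe, Finset.mem_filter] at he ⊢
    obtain ⟨he, hue, hve⟩ := he
    have hcard1 : (e ∩ V1).card = 1 := hE e he hve
    have hins : insert u (e ∩ V1) ⊆ e := by
      intro t ht
      rcases Finset.mem_insert.mp ht with rfl | ht
      · exact hue
      · exact (Finset.mem_inter.mp ht).1
    have hcard2 : (insert u (e ∩ V1)).card = 2 := by
      rw [Finset.card_insert_of_notMem (fun hc => huV1 (Finset.mem_inter.mp hc).2), hcard1]
    rw [Finset.mem_product]
    constructor
    · rw [Finset.mem_powersetCard]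
      exact ⟨Finset.inter_subset_right, hcard1⟩
    · rw [Finset.mem_powersetCard]
      constructor
      · intro t ht
        simp only [Finset.mem_sdiff, Finset.mem_insert, Finset.mem_inter, not_or] at ht
        obtain ⟨hte, htu, htV1⟩ := ht
        rw [hV2, Finset.mem_sdiff, Finset.mem_erase]
        exact ⟨⟨fun h => hve (h ▸ hte), H.edges_sub e he hte⟩, fun hc => htV1 ⟨hte, hc⟩⟩
      · rw [Finset.card_sdiff_of_subset hins, H.edges_card e he, hcard2]
  · intro e1 h1 e2 h2 hh
    have hh1 : e1 ∩ V1 = e2 ∩ V1 := congrArg Prod.fst hh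
    have hh2 : e1 \ insert u (e1 ∩ V1) = e2 \ insert u (e2 ∩ V1) := congrArg Prod.snd hh
    rw [key e1 h1, key e2 h2, hh2, hh1]

lemma link_le (H : HGraph 3) (v x : ℕ) :
    (((((H.verts.erase v).powersetCard 2).filter fun p => insert v p ∈ H.edges).filter
        fun p => x ∈ p).card)
      ≤ (((H.verts.erase v).erase x).filter fun y => insert v (insert x {y}) ∈ H.edges).card := by
  have h := Finset.card_le_card_of_injOn (f := fun p => p.erase x)
    (s := (((H.verts.erase v).powersetCard 2).filter fun p => insert v p ∈ H.edges).filter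
        fun p => x ∈ p)
    (t := (((H.verts.erase v).erase x).filter fun y => insert v (insert x {y}) ∈ H.edges).powersetCard 1)
    ?_ ?_
  · simpa [Finset.card_powersetCard] using h
  · intro p hp
    simp only [Finset.mem_coe] at hp ⊢
    simp only [Finset.mem_filter, Finset.mem_powersetCard] at hp
    obtain ⟨⟨⟨hsub, hc2⟩, hedge⟩, hxp⟩ := hp
    rw [Finset.mem_powersetCard]
    constructor
    · intro y hy
      rw [Finset.mem_erase] at hy
      have hyp : y ∈ p := hy.2
      have hrep : insert x {y} = p := by
        apply Finset.eq_of_subset_of_card_le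
        · intro t ht
          rcases Finset.mem_insert.mp ht with rfl | ht
          · exact hxp
          · exact Finset.mem_singleton.mp ht ▸ hyp
        · rw [hc2, Finset.card_insert_of_notMem (by simp [Ne.symm hy.1]), Finset.card_singleton]
      rw [Finset.mem_filter, Finset.mem_erase]
      exact ⟨⟨hy.1, hsub hyp⟩, by rw [hrep]; exact hedge⟩
    · rw [Finset.card_erase_of_mem hxp, hc2]
  · intro p1 h1 p2 h2 hh
    simp only [Finset.coe_filter, Set.mem_setOf_eq] at h1 h2
    have hh' : p1.erase x = p2.erase x := hh
    rw [← Finset.insert_erase h1.2, ← Finset.insert_erase h2.2, hh']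
set_option maxHeartbeats 10000000 in
/-- `𝔽_{3,2}` is weakly vertex-extendable with respect to the
semibipartite pattern. -/
theorem statement_17 :
    ∀ δ : ℝ, 0 < δ → ∃ N₀ : ℕ, ∃ ζ : ℝ, 0 < ζ ∧
      ∀ H : HGraph 3, N₀ ≤ H.verts.card → ¬ F32.IsCopyIn H →
        (4/9 - ζ) * (((H.verts.card - 1).choose 2 : ℕ) : ℝ) ≤ (H.minDeg : ℝ) →
        ∀ v ∈ H.verts, Semibipartite 3 (H.deleteVert v) →
          (H.deg v : ℝ) ≤ (4/9 + δ) * (((H.verts.card - 1).choose 2 : ℕ) : ℝ) := by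
  intro δ hδpos
  have hδ₀pos : 0 < min δ (1/1000) := lt_min hδpos (by norm_num)
  have hδ₀le : min δ (1/1000) ≤ δ := min_le_left _ _
  have hδ₀small : min δ (1/1000) ≤ 1/1000 := min_le_right _ _
  set η : ℝ := min δ (1/1000) / 100 with hηdef
  have hη : 0 < η := by positivity
  have hηs : η ≤ 1/100000 := by rw [hηdef]; linarith
  have hδη : 100 * η ≤ δ := by rw [hηdef]; linarith
  refine ⟨⌈(10^6 : ℝ)/η^2⌉₊ + 2, η^2, by positivity, ?_⟩
  intro H hn hF hmin v hv hsemi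
  classical
  obtain ⟨V1, hV1sub', hV1e⟩ := hsemi
  have hV1sub : V1 ⊆ H.verts.erase v := hV1sub'
  set V2 : Finset ℕ := H.verts.erase v \ V1 with hV2def
  have hV2mem : ∀ t ∈ V2, t ∈ H.verts.erase v ∧ t ∉ V1 := by
    intro t ht; rw [hV2def, Finset.mem_sdiff] at ht; exact ht
  have hE : ∀ e ∈ H.edges, v ∉ e → (e ∩ V1).card = 1 := by
    intro e he hv'
    exact hV1e e (by rw [del_edges]; exact Finset.mem_filter.mpr ⟨he, hv'⟩)
  -- basic size facts
  have hNbig : (10^6 : ℝ) / η^2 ≤ (H.verts.card : ℝ) := by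
    have h1 : ((⌈(10^6 : ℝ)/η^2⌉₊ + 2 : ℕ) : ℝ) ≤ (H.verts.card : ℝ) := Nat.cast_le.mpr hn
    have h2 := Nat.le_ceil ((10^6 : ℝ)/η^2)
    push_cast at h1
    linarith
  have hN6 : (10^6 : ℝ) ≤ η^2 * (H.verts.card : ℝ) := by
    rw [div_le_iff₀ (by positivity)] at hNbig; linarith [hNbig]
  have hNN : (10^6 : ℝ) ≤ (H.verts.card : ℝ) := by nlinarith [sq_nonneg η]
  have hηN : (10^5 : ℝ) ≤ η * ((H.verts.card : ℝ) - 1) := by nlinarith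
  have hn2 : 2 ≤ H.verts.card := by
    have h : ((2:ℕ):ℝ) ≤ (H.verts.card : ℝ) := by push_cast; linarith
    exact_mod_cast h
  have hsq : 250000 * (H.verts.card : ℝ) ≤ η^2 * ((H.verts.card : ℝ)-1)^2 := by nlinarith
  have hcast : ((H.verts.card - 1 : ℕ):ℝ) = (H.verts.card : ℝ) - 1 := by
    rw [Nat.cast_sub (by omega)]; norm_num
  have hD : (((H.verts.card - 1).choose 2 : ℕ):ℝ)
      = ((H.verts.card : ℝ)-1)*((H.verts.card : ℝ)-2)/2 := by
    rw [Nat.cast_choose_two, hcast]; ring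
  have herase : (H.verts.erase v).card = H.verts.card - 1 := Finset.card_erase_of_mem hv
  have hab : V1.card + V2.card = H.verts.card - 1 := by
    have h2 : V2.card = (H.verts.card - 1) - V1.card := by
      rw [hV2def, Finset.card_sdiff_of_subset hV1sub, herase]
    have h3 : V1.card ≤ H.verts.card - 1 := herase ▸ Finset.card_le_card hV1sub
    omega
  have hABr : (V1.card : ℝ) + (V2.card : ℝ) = (H.verts.card : ℝ) - 1 := by
    have h : ((V1.card + V2.card : ℕ):ℝ) = ((H.verts.card - 1 : ℕ):ℝ) := by rw [hab]
    rw [hcast] at h; push_cast at h; linarith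
  have hA0 : (0:ℝ) ≤ V1.card := Nat.cast_nonneg _
  have hB0 : (0:ℝ) ≤ V2.card := Nat.cast_nonneg _
  -- min degree, real form
  have hdeg : ∀ u ∈ H.verts,
      (4/9 - η^2) * (((H.verts.card:ℝ)-1)*((H.verts.card:ℝ)-2)/2) ≤ (H.deg u : ℝ) := by
    intro u hu
    have h1 : H.minDeg ≤ H.deg u := by
      rw [HGraph.minDeg, dif_pos ⟨v, hv⟩]; exact Finset.inf'_le _ hu
    have h2 : (H.minDeg : ℝ) ≤ (H.deg u : ℝ) := Nat.cast_le.mpr h1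
    rw [hD] at hmin
    linarith
  -- degree split
  have degsplit : ∀ u : ℕ, H.deg u = (H.edges.filter fun e => u ∈ e ∧ v ∈ e).card
      + (H.edges.filter fun e => u ∈ e ∧ v ∉ e).card := by
    intro u
    rw [HGraph.deg,
      ← Finset.card_filter_add_card_filter_not (s := H.edges.filter fun e => u ∈ e)
        (p := fun e => v ∈ e), Finset.filter_filter, Finset.filter_filter]
  -- V1 nonempty
  have hV1ne : V1.Nonempty := by
    by_contra hcon
    rw [Finset.not_nonempty_iff_eq_empty] at hcon
    obtain ⟨u, hu⟩ : (H.verts.erase v).Nonempty := by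
      rw [← Finset.card_pos, herase]; omega
    have huv : u ≠ v := (Finset.mem_erase.mp hu).1
    have huvrt : u ∈ H.verts := (Finset.mem_erase.mp hu).2
    have h0 : (H.edges.filter fun e => u ∈ e ∧ v ∉ e) = ∅ := by
      rw [Finset.filter_eq_empty_iff]
      rintro e he ⟨-, hve⟩
      have := hE e he hve
      rw [hcon] at this
      simp at this
    have h1 : H.deg u ≤ H.verts.card := by
      rw [degsplit u, h0]
      simpa using count_uv H u v huv
    have h2 := hdeg u huvrt
    have h3 : ((H.deg u : ℕ):ℝ) ≤ (H.verts.card:ℝ) := Nat.cast_le.mpr h1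
    have e1 : (0.4:ℝ) ≤ 4/9 - η^2 := by nlinarith
    have e2 : ((H.verts.card:ℝ)-2) * 999998 ≤ ((H.verts.card:ℝ)-1)*((H.verts.card:ℝ)-2) := by
      nlinarith
    nlinarith
  -- covered / missing pairs for w ∈ V1
  have hCovMis : ∀ w : ℕ,
      ((V2.powersetCard 2).filter fun p => insert w p ∈ H.edges).card
      + ((V2.powersetCard 2).filter fun p => insert w p ∉ H.edges).card = V2.card.choose 2 := by
    intro w
    rw [Finset.card_filter_add_card_filter_not, Finset.card_powersetCard]
  have hchooseb : ((V2.card.choose 2 : ℕ):ℝ) = (V2.card:ℝ)*((V2.card:ℝ)-1)/2 :=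
    Nat.cast_choose_two ℝ V2.card
  have hdegw : ∀ w ∈ V1, (H.deg w : ℝ) ≤ (H.verts.card:ℝ)
      + (((V2.powersetCard 2).filter fun p => insert w p ∈ H.edges).card : ℝ) := by
    intro w hw
    have hwv : w ≠ v := (Finset.mem_erase.mp (hV1sub hw)).1
    have h1 := count_uv H w v hwv
    have h2 := count_w H v V1 V2 hV1sub hV2def hE w hw
    have h3 := degsplit w
    have h4 : H.deg w ≤ H.verts.card
        + ((V2.powersetCard 2).filter fun p => insert w p ∈ H.edges).card := by omega
    exact_mod_cast h4
  have hMis : ∀ w ∈ V1,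
      ((((V2.powersetCard 2).filter fun p => insert w p ∉ H.edges).card : ℕ):ℝ)
      ≤ (V2.card:ℝ)*((V2.card:ℝ)-1)/2 + (H.verts.card:ℝ)
        - (4/9 - η^2) * (((H.verts.card:ℝ)-1)*((H.verts.card:ℝ)-2)/2) := by
    intro w hw
    have h1 := hdegw w hw
    have h2 := hdeg w (Finset.mem_of_mem_erase (hV1sub hw))
    have h3 := hCovMis w
    have h4 : (((V2.powersetCard 2).filter fun p => insert w p ∈ H.edges).card : ℝ)
        + (((V2.powersetCard 2).filter fun p => insert w p ∉ H.edges).card : ℝ)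
        = ((V2.card.choose 2 : ℕ):ℝ) := by exact_mod_cast congrArg (Nat.cast : ℕ → ℝ) h3
    rw [hchooseb] at h4
    linarith
  -- lower bound on |V2|
  have hBlb : (2/3 - η^2) * ((H.verts.card:ℝ)-1) ≤ (V2.card:ℝ) := by
    obtain ⟨w₀, hw₀⟩ := hV1ne
    have h1 := hdegw w₀ hw₀
    have h2 := hdeg w₀ (Finset.mem_of_mem_erase (hV1sub hw₀))
    have h3 : (((V2.powersetCard 2).filter fun p => insert w₀ p ∈ H.edges).card : ℝ)
        ≤ (V2.card:ℝ)*((V2.card:ℝ)-1)/2 := by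
      rw [← hchooseb]
      exact_mod_cast Nat.cast_le.mpr ((Finset.card_filter_le _ _).trans_eq
        (Finset.card_powersetCard 2 V2))
    by_contra hcon
    push_neg at hcon
    have hM1 : (0:ℝ) ≤ (H.verts.card:ℝ)-1 := by linarith
    have h9 : η^2 ≤ 1/30 := by nlinarith only [hηs, hη]
    have hc0 : (0:ℝ) ≤ (2/3 - η^2) * ((H.verts.card:ℝ)-1) := by nlinarith only [h9, hM1]
    have hcle : (V2.card:ℝ) ≤ (2/3 - η^2) * ((H.verts.card:ℝ)-1) := le_of_lt hcon
    have e1 : (V2.card:ℝ)*((V2.card:ℝ)-1) ≤ (V2.card:ℝ)*(V2.card:ℝ) := by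
      nlinarith only [hB0]
    have e2 := mul_le_mul hcle hcle hB0 hc0
    have e3 := mul_le_mul_of_nonneg_right h9 (sq_nonneg (η*((H.verts.card:ℝ)-1)))
    nlinarith only [h1, h2, h3, e1, e2, e3, hsq, hNN]
  have hAub : (V1.card:ℝ) ≤ (1/3 + η^2) * ((H.verts.card:ℝ)-1) := by linarith
  -- lower bound on |V1|
  have hBne : V2.Nonempty := by
    rw [← Finset.card_pos]
    have hM1 : (0:ℝ) ≤ (H.verts.card:ℝ)-1 := by nlinarith only [hNN]
    have h9 : η^2 ≤ 1/30 := by nlinarith only [hηs, hη]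
    have : (0:ℝ) < (V2.card:ℝ) := by nlinarith only [hBlb, hNN, h9]
    exact_mod_cast this
  have hAlb : (1/3 - 2*η^2) * ((H.verts.card:ℝ)-1) ≤ (V1.card:ℝ) := by
    obtain ⟨u₀, hu₀⟩ := hBne
    have hu₀v : u₀ ≠ v := (Finset.mem_erase.mp (hV2mem u₀ hu₀).1).1
    have hu₀vert : u₀ ∈ H.verts := Finset.mem_of_mem_erase (hV2mem u₀ hu₀).1
    have h1 := count_uv H u₀ v hu₀v
    have h2 := count_u H v V1 V2 hV1sub hV2def hE u₀ hu₀
    have h3 := degsplit u₀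
    have h4 : H.deg u₀ ≤ H.verts.card + V1.card * V2.card := by omega
    have h5 : (H.deg u₀ : ℝ) ≤ (H.verts.card:ℝ) + (V1.card:ℝ) * (V2.card:ℝ) := by
      exact_mod_cast h4
    have h6 := hdeg u₀ hu₀vert
    by_contra hcon
    push_neg at hcon
    have hM1 : (0:ℝ) ≤ (H.verts.card:ℝ)-1 := by nlinarith only [hNN]
    have h9 : η^2 ≤ 1/30 := by nlinarith only [hηs, hη]
    have hgap : (0:ℝ) ≤ ((H.verts.card:ℝ)-1) - (1/3 - 2*η^2) * ((H.verts.card:ℝ)-1)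
        - (V1.card:ℝ) := by nlinarith only [hcon, hM1, h9, sq_nonneg η]
    have key := mul_nonneg (le_of_lt (sub_pos.mpr hcon)) hgap
    have hABprod : (V1.card:ℝ) * (V2.card:ℝ)
        = (V1.card:ℝ)*((H.verts.card:ℝ)-1) - (V1.card:ℝ)*(V1.card:ℝ) := by
      have hBeq : (V2.card:ℝ) = ((H.verts.card:ℝ)-1) - (V1.card:ℝ) := by linarith
      rw [hBeq]; ring
    nlinarith only [key, hABprod, h5, h6, hsq, hNN, sq_nonneg (η^2*((H.verts.card:ℝ)-1))]
  have hBub : (V2.card:ℝ) ≤ (2/3 + 2*η^2) * ((H.verts.card:ℝ)-1) := by linarith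
  -- uniform missing bound
  have hMis2 : ∀ w ∈ V1,
      ((((V2.powersetCard 2).filter fun p => insert w p ∉ H.edges).card : ℕ):ℝ)
      ≤ 2*η^2*((H.verts.card:ℝ)-1)^2 := by
    intro w hw
    have h1 := hMis w hw
    have hM1 : (0:ℝ) ≤ (H.verts.card:ℝ)-1 := by nlinarith only [hNN]
    have hub0 : (0:ℝ) ≤ (2/3 + 2*η^2) * ((H.verts.card:ℝ)-1) := by
      nlinarith only [hM1, sq_nonneg η]
    have e1 : (V2.card:ℝ)*((V2.card:ℝ)-1) ≤ (V2.card:ℝ)*(V2.card:ℝ) := by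
      nlinarith only [hB0]
    have e2 : (V2.card:ℝ)*(V2.card:ℝ)
        ≤ ((2/3 + 2*η^2) * ((H.verts.card:ℝ)-1))*((2/3 + 2*η^2) * ((H.verts.card:ℝ)-1)) :=
      mul_le_mul hBub hBub hB0 hub0
    have h9 : η^2 ≤ 1/30 := by nlinarith only [hηs, hη]
    have e3 := mul_le_mul_of_nonneg_right h9 (sq_nonneg (η*((H.verts.card:ℝ)-1)))
    nlinarith only [h1, e1, e2, e3, hsq, hNN]
  -- the link of v
  set L : Finset (Finset ℕ) :=
    ((H.verts.erase v).powersetCard 2).filter (fun p => insert v p ∈ H.edges) with hLdef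
  have hLdeg : H.deg v = L.card := deg_link_card H v
  have hLmem : ∀ p ∈ L, p.card = 2 ∧ p ⊆ H.verts.erase v ∧ insert v p ∈ H.edges := by
    intro p hp
    rw [hLdef, Finset.mem_filter, Finset.mem_powersetCard] at hp
    exact ⟨hp.1.2, hp.1.1, hp.2⟩
  set L22 : Finset (Finset ℕ) := L.filter (fun p => p ∩ V1 = ∅) with hL22def
  set Lr : Finset (Finset ℕ) := L.filter (fun p => ¬ p ∩ V1 = ∅) with hLrdef
  have hLsplit : L.card = L22.card + Lr.card :=
    (Finset.card_filter_add_card_filter_not (fun p => p ∩ V1 = ∅)).symm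
  have hL22V2 : ∀ p ∈ L22, p ⊆ V2 := by
    intro p hp t ht
    rw [hL22def, Finset.mem_filter] at hp
    rw [hV2def, Finset.mem_sdiff]
    refine ⟨(hLmem p hp.1).2.1 ht, fun hc => ?_⟩
    have : t ∈ p ∩ V1 := Finset.mem_inter.mpr ⟨ht, hc⟩
    rw [hp.2] at this
    simp at this
  have hL22P : L22 ⊆ V2.powersetCard 2 := by
    intro p hp
    rw [Finset.mem_powersetCard]
    exact ⟨hL22V2 p hp, (hLmem p (Finset.filter_subset _ _ hp)).1⟩
  have hL22c : ((L22.card : ℕ) : ℝ) ≤ (V2.card:ℝ)*((V2.card:ℝ)-1)/2 := by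
    rw [← hchooseb]
    exact_mod_cast Nat.cast_le.mpr ((Finset.card_le_card hL22P).trans_eq
      (Finset.card_powersetCard 2 V2))
  -- constraint I : per-vertex bound
  have hNx : ∀ x ∈ V1, ((L.filter fun p => x ∈ p).card : ℝ) ≤ (V2.card:ℝ) := by
    intro x hx
    have hxe : x ∈ H.verts.erase v := hV1sub hx
    have hxv : x ≠ v := (Finset.mem_erase.mp hxe).1
    have hlink := link_le H v x
    rw [← hLdef] at hlink
    have hsplitN : (((H.verts.erase v).erase x).filter
          fun y => insert v (insert x {y}) ∈ H.edges).card
        = ((((H.verts.erase v).erase x).filter fun y => insert v (insert x {y}) ∈ H.edges).filter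
            fun y => y ∈ V1).card
          + ((((H.verts.erase v).erase x).filter fun y => insert v (insert x {y}) ∈ H.edges).filter
            fun y => ¬ y ∈ V1).card :=
      (Finset.card_filter_add_card_filter_not (fun y => y ∈ V1)).symm
    set Nx := ((H.verts.erase v).erase x).filter fun y => insert v (insert x {y}) ∈ H.edges
      with hNxdef
    set N1 := Nx.filter (fun y => y ∈ V1) with hN1def
    set N2 := Nx.filter (fun y => ¬ y ∈ V1) with hN2def
    have hN2V2 : N2 ⊆ V2 := by
      intro y hy
      rw [hN2def, Finset.mem_filter, hNxdef, Finset.mem_filter] at hy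
      rw [hV2def, Finset.mem_sdiff]
      exact ⟨Finset.mem_of_mem_erase hy.1.1, hy.2⟩
    by_cases hN1e : N1.Nonempty
    · obtain ⟨w, hwN1⟩ := hN1e
      have hwfacts : w ∈ Nx ∧ w ∈ V1 := by
        rw [hN1def, Finset.mem_filter] at hwN1; exact hwN1
      have hwNx := hwfacts.1
      rw [hNxdef, Finset.mem_filter] at hwNx
      have hwx : w ≠ x := (Finset.mem_erase.mp hwNx.1).1
      have hwedge : insert v (insert x {w}) ∈ H.edges := hwNx.2
      have hN2small : ((N2.card : ℕ):ℝ) < 3*η*((H.verts.card:ℝ)-1) := by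
        by_contra hcon
        push_neg at hcon
        have hsubP : N2.powersetCard 2 ⊆ V2.powersetCard 2 := Finset.powersetCard_mono hN2V2
        have hMw := hMis2 w hwfacts.2
        have hbig : (((V2.powersetCard 2).filter fun p => insert w p ∉ H.edges).card : ℝ)
            < ((N2.powersetCard 2).card : ℝ) := by
          rw [Finset.card_powersetCard, Nat.cast_choose_two]
          nlinarith only [hcon, hMw, hηN, hη]
        have hex : ∃ p ∈ N2.powersetCard 2,
            p ∉ (V2.powersetCard 2).filter fun p => insert w p ∉ H.edges := by
          by_contra hc
          push_neg at hc
          exact absurd (Nat.cast_le.mpr (Finset.card_le_card hc)) (not_le.mpr hbig)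
        obtain ⟨p, hp, hpM⟩ := hex
        have hpmem := Finset.mem_powersetCard.mp hp
        have hedge : insert w p ∈ H.edges := by
          by_contra hc
          exact hpM (Finset.mem_filter.mpr ⟨hsubP hp, hc⟩)
        obtain ⟨y, z, hyz, rfl⟩ := Finset.card_eq_two.mp hpmem.2
        have hyN2 : y ∈ N2 := hpmem.1 (by simp)
        have hzN2 : z ∈ N2 := hpmem.1 (by simp)
        have hyfacts : y ∈ Nx ∧ y ∉ V1 := by
          rw [hN2def, Finset.mem_filter] at hyN2; exact hyN2
        have hzfacts : z ∈ Nx ∧ z ∉ V1 := by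
          rw [hN2def, Finset.mem_filter] at hzN2; exact hzN2
        have hyNx := hyfacts.1
        have hzNx := hzfacts.1
        rw [hNxdef, Finset.mem_filter] at hyNx hzNx
        exact hF (f32_copy H v x w y z
          (Ne.symm hxv)
          (fun h => (Finset.mem_erase.mp (Finset.mem_of_mem_erase hwNx.1)).1 h.symm)
          (fun h => (Finset.mem_erase.mp (Finset.mem_of_mem_erase hyNx.1)).1 h.symm)
          (fun h => (Finset.mem_erase.mp (Finset.mem_of_mem_erase hzNx.1)).1 h.symm)
          (Ne.symm hwx)
          (fun h => (Finset.mem_erase.mp hyNx.1).1 h.symm)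
          (fun h => (Finset.mem_erase.mp hzNx.1).1 h.symm)
          (fun h => hyfacts.2 (h ▸ hwfacts.2))
          (fun h => hzfacts.2 (h ▸ hwfacts.2))
          hyz hwedge hyNx.2 hzNx.2 hedge)
      have hN1a : (N1.card : ℝ) ≤ (V1.card : ℝ) := by
        refine Nat.cast_le.mpr (Finset.card_le_card ?_)
        intro y hy
        rw [hN1def, Finset.mem_filter] at hy
        exact hy.2
      have hcomb : ((L.filter fun p => x ∈ p).card : ℝ) ≤ (N1.card : ℝ) + (N2.card : ℝ) := by
        have := Nat.cast_le (α := ℝ) |>.mpr hlink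
        rw [hsplitN] at this
        push_cast at this ⊢
        linarith
      nlinarith only [hcomb, hN1a, hN2small, hAub, hBlb, hηN, hηs, hη]
    · have hN1z : N1.card = 0 := by
        rw [Finset.card_eq_zero, ← Finset.not_nonempty_iff_eq_empty]; exact hN1e
      have hN2b : N2.card ≤ V2.card := Finset.card_le_card hN2V2
      have : (L.filter fun p => x ∈ p).card ≤ V2.card := by omega
      exact_mod_cast Nat.cast_le.mpr this
  have hLr : (Lr.card : ℝ) ≤ (V1.card:ℝ) * (V2.card:ℝ) := by
    have hsub : Lr ⊆ V1.biUnion fun x => L.filter fun p => x ∈ p := by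
      intro p hp
      rw [hLrdef, Finset.mem_filter] at hp
      obtain ⟨t, ht⟩ := Finset.nonempty_iff_ne_empty.mpr hp.2
      rw [Finset.mem_inter] at ht
      exact Finset.mem_biUnion.mpr ⟨t, ht.2, Finset.mem_filter.mpr ⟨hp.1, ht.1⟩⟩
    have h1 : Lr.card ≤ ∑ x ∈ V1, (L.filter fun p => x ∈ p).card :=
      (Finset.card_le_card hsub).trans Finset.card_biUnion_le
    have h2 : ((Lr.card : ℕ):ℝ) ≤ ∑ x ∈ V1, ((L.filter fun p => x ∈ p).card : ℝ) := by
      have := Nat.cast_le (α := ℝ) |>.mpr h1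
      push_cast at this
      exact this
    calc ((Lr.card : ℕ):ℝ) ≤ ∑ x ∈ V1, ((L.filter fun p => x ∈ p).card : ℝ) := h2
      _ ≤ ∑ _x ∈ V1, (V2.card:ℝ) := Finset.sum_le_sum hNx
      _ = (V1.card:ℝ) * (V2.card:ℝ) := by rw [Finset.sum_const, nsmul_eq_mul]
  -- common arithmetic facts for the endgame
  have hM1 : (0:ℝ) ≤ (H.verts.card:ℝ)-1 := by nlinarith only [hNN]
  have hM6 : (999999:ℝ) ≤ (H.verts.card:ℝ)-1 := by nlinarith only [hNN]
  have h9 : η^2 ≤ 1/30 := by nlinarith only [hηs, hη]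
  have k1 : (10^5:ℝ)*((H.verts.card:ℝ)-1) ≤ (η*((H.verts.card:ℝ)-1))*((H.verts.card:ℝ)-1) :=
    mul_le_mul_of_nonneg_right hηN hM1
  have hδ0 : (0:ℝ) ≤ δ := le_of_lt hδpos
  have k2 : (100*η)*((H.verts.card:ℝ)-1)^2 ≤ δ*((H.verts.card:ℝ)-1)^2 :=
    mul_le_mul_of_nonneg_right hδη (sq_nonneg _)
  have k3 : (δ*((H.verts.card:ℝ)-1)) * 999999 ≤ (δ*((H.verts.card:ℝ)-1)) * ((H.verts.card:ℝ)-1) :=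
    mul_le_mul_of_nonneg_left hM6 (mul_nonneg hδ0 hM1)
  have hBBle : (V2.card:ℝ)*((V2.card:ℝ)-1)/2 ≤ (2/9 + η)*((H.verts.card:ℝ)-1)^2 := by
    have hub0 : (0:ℝ) ≤ (2/3 + 2*η^2) * ((H.verts.card:ℝ)-1) := by
      nlinarith only [hM1, sq_nonneg η]
    have e1 : (V2.card:ℝ)*((V2.card:ℝ)-1) ≤ (V2.card:ℝ)*(V2.card:ℝ) := by
      nlinarith only [hB0]
    have e2 := mul_le_mul hBub hBub hB0 hub0
    have hη2 : η^2 ≤ (1/100000)*η := by nlinarith only [hη, hηs]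
    have hη4 : η^4 ≤ η^2 := by nlinarith only [h9, sq_nonneg η]
    have hco : (0:ℝ) ≤ η - (4/3)*η^2 - 2*η^4 := by linarith only [hη2, hη4, hη]
    nlinarith only [e1, e2, mul_nonneg hco (sq_nonneg ((H.verts.card:ℝ)-1))]
  by_cases hcase : (L22.card : ℝ) ≤ 2*η*((H.verts.card:ℝ)-1)^2
  · -- CASE A
    rw [hD]
    have hdegr : (H.deg v : ℝ) = (L22.card:ℝ) + (Lr.card:ℝ) := by
      rw [hLdeg]; exact_mod_cast hLsplit
    have hABle : (V1.card:ℝ)*(V2.card:ℝ) ≤ (2/9 + η)*((H.verts.card:ℝ)-1)^2 := by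
      have hub1 : (0:ℝ) ≤ (1/3 + η^2) * ((H.verts.card:ℝ)-1) := by
        nlinarith only [hM1, sq_nonneg η]
      have e2 := mul_le_mul hAub hBub hB0 hub1
      have hη2 : η^2 ≤ (1/100000)*η := by nlinarith only [hη, hηs]
      have hη4 : η^4 ≤ η^2 := by nlinarith only [h9, sq_nonneg η]
      have hco : (0:ℝ) ≤ η - (4/3)*η^2 - 2*η^4 := by linarith only [hη2, hη4, hη]
      nlinarith only [e2, mul_nonneg hco (sq_nonneg ((H.verts.card:ℝ)-1))]
    nlinarith only [hdegr, hcase, hLr, hABle, k1, k2, k3, hM1, hη, hδ0, hηN]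
  · -- CASE B
    push_neg at hcase
    have hposη : (0:ℝ) < η*((H.verts.card:ℝ)-1) := by nlinarith only [hηN]
    -- bound on the number of bad pairs for constraint II
    have hsumTot : ∑ p ∈ V2.powersetCard 2, (V1.filter fun x => insert x p ∉ H.edges).card
        = ∑ x ∈ V1, ((V2.powersetCard 2).filter fun p => insert x p ∉ H.edges).card := by
      rw [← prod_filter_card' V1 (V2.powersetCard 2) (fun x p => insert x p ∉ H.edges),
          ← prod_filter_card V1 (V2.powersetCard 2) (fun x p => insert x p ∉ H.edges)]
    have hsumB : (∑ x ∈ V1, (((V2.powersetCard 2).filter fun p => insert x p ∉ H.edges).card : ℝ))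
        ≤ (V1.card:ℝ) * (2*η^2*((H.verts.card:ℝ)-1)^2) := by
      calc (∑ x ∈ V1, (((V2.powersetCard 2).filter fun p => insert x p ∉ H.edges).card : ℝ))
          ≤ ∑ _x ∈ V1, 2*η^2*((H.verts.card:ℝ)-1)^2 :=
            Finset.sum_le_sum (fun x hx => hMis2 x hx)
        _ = (V1.card:ℝ) * (2*η^2*((H.verts.card:ℝ)-1)^2) := by
            rw [Finset.sum_const, nsmul_eq_mul]
    set badII := (V2.powersetCard 2).filter
        (fun p => η*((H.verts.card:ℝ)-1) ≤ ((V1.filter fun x => insert x p ∉ H.edges).card : ℝ))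
      with hbadIIdef
    have hbadII : (badII.card : ℝ) * (η*((H.verts.card:ℝ)-1))
        ≤ (V1.card:ℝ) * (2*η^2*((H.verts.card:ℝ)-1)^2) := by
      have h1 : (badII.card : ℕ) • (η*((H.verts.card:ℝ)-1))
          ≤ ∑ p ∈ badII, ((V1.filter fun x => insert x p ∉ H.edges).card : ℝ) :=
        Finset.card_nsmul_le_sum badII _ _ (fun p hp => (Finset.mem_filter.mp hp).2)
      rw [nsmul_eq_mul] at h1
      have h2 : ∑ p ∈ badII, ((V1.filter fun x => insert x p ∉ H.edges).card : ℝ)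
          ≤ ∑ p ∈ V2.powersetCard 2, ((V1.filter fun x => insert x p ∉ H.edges).card : ℝ) :=
        Finset.sum_le_sum_of_subset_of_nonneg (Finset.filter_subset _ _)
          (fun _ _ _ => Nat.cast_nonneg _)
      have h3 : ∑ p ∈ V2.powersetCard 2, ((V1.filter fun x => insert x p ∉ H.edges).card : ℝ)
          = ∑ x ∈ V1, (((V2.powersetCard 2).filter fun p => insert x p ∉ H.edges).card : ℝ) := by
        have := congrArg (Nat.cast : ℕ → ℝ) hsumTot
        push_cast at this
        exact this
      rw [h3] at h2
      linarith [hsumB]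
    have hbadIIc : (badII.card : ℝ) ≤ η*((H.verts.card:ℝ)-1)^2 := by
      have h4 : (badII.card:ℝ) ≤ (V1.card:ℝ)*(2*η*((H.verts.card:ℝ)-1)) := by
        have heq : (V1.card:ℝ) * (2*η^2*((H.verts.card:ℝ)-1)^2)
            = ((V1.card:ℝ)*(2*η*((H.verts.card:ℝ)-1))) * (η*((H.verts.card:ℝ)-1)) := by ring
        exact le_of_mul_le_mul_right (by rw [← heq]; exact hbadII) hposη
      have h5 := mul_le_mul_of_nonneg_right hAub (le_of_lt hposη)
      nlinarith only [h4, h5, h9, hposη, mul_nonneg (mul_nonneg (le_of_lt hη) hM1)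
        (mul_nonneg (le_of_lt hη) hM1)]
    have hlt : badII.card < L22.card := by
      have hr : (badII.card:ℝ) < (L22.card:ℝ) := by
        nlinarith only [hbadIIc, hcase, k1, hM1, hη]
      exact_mod_cast hr
    have hex : ∃ pq ∈ L22, pq ∉ badII := by
      by_contra hc
      push_neg at hc
      exact absurd (Finset.card_le_card (fun p hp => hc p hp)) (not_le.mpr hlt)
    obtain ⟨pq, hpqL22, hpqbad⟩ := hex
    have hpqL : pq ∈ L := Finset.filter_subset _ _ hpqL22
    have hpqP2 : pq ∈ V2.powersetCard 2 := hL22P hpqL22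
    have hMs : ((V1.filter fun x => insert x pq ∉ H.edges).card : ℝ)
        < η*((H.verts.card:ℝ)-1) := by
      by_contra hc
      push_neg at hc
      exact hpqbad (by rw [hbadIIdef]; exact Finset.mem_filter.mpr ⟨hpqP2, hc⟩)
    set L11 := Lr.filter (fun p => p ⊆ V1) with hL11def
    set L12 := Lr.filter (fun p => ¬ p ⊆ V1) with hL12def
    have hLrsplit : Lr.card = L11.card + L12.card :=
      (Finset.card_filter_add_card_filter_not (fun p => p ⊆ V1)).symm
    have hL11mem : ∀ p ∈ L11, p ∈ L ∧ p ⊆ V1 := by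
      intro p hp
      rw [hL11def, Finset.mem_filter, hLrdef, Finset.mem_filter] at hp
      exact ⟨hp.1.1, hp.2⟩
    -- constraint II: L11 is small
    have hL11small : (L11.card : ℝ) ≤ η*((H.verts.card:ℝ)-1)^2 := by
      by_contra hcon
      push_neg at hcon
      have htouch : (L11.filter fun p => ¬ Disjoint p (V1.filter fun x => insert x pq ∉ H.edges)).card
          ≤ (V1.filter fun x => insert x pq ∉ H.edges).card * (H.verts.erase v).card := by
        apply touch_card
        intro p hp
        have hm := hLmem p (hL11mem p hp).1
        exact ⟨hm.1, hm.2.1⟩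
      have hlt2 : (L11.filter fun p =>
          ¬ Disjoint p (V1.filter fun x => insert x pq ∉ H.edges)).card < L11.card := by
        have hr1 : ((L11.filter fun p =>
            ¬ Disjoint p (V1.filter fun x => insert x pq ∉ H.edges)).card : ℝ)
            ≤ ((V1.filter fun x => insert x pq ∉ H.edges).card : ℝ) * ((H.verts.card:ℝ)-1) := by
          have := Nat.cast_le (α := ℝ) |>.mpr htouch
          push_cast at this
          rw [herase, hcast] at this
          exact this
        have hr : ((L11.filter fun p =>
            ¬ Disjoint p (V1.filter fun x => insert x pq ∉ H.edges)).card : ℝ) < (L11.card:ℝ) := by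
          nlinarith only [hr1, hMs, hcon, hM1]
        exact_mod_cast hr
      have hpos2 : 0 < (L11.filter fun p =>
          Disjoint p (V1.filter fun x => insert x pq ∉ H.edges)).card := by
        have hsp := Finset.card_filter_add_card_filter_not
          (s := L11) (p := fun p => Disjoint p (V1.filter fun x => insert x pq ∉ H.edges))
        omega
      obtain ⟨sp, hsp⟩ := Finset.card_pos.mp hpos2
      rw [Finset.mem_filter] at hsp
      obtain ⟨hspL11, hspdisj⟩ := hsp
      have hspfacts := hL11mem sp hspL11
      have hmsp := hLmem sp hspfacts.1
      have hmpq := hLmem pq hpqL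
      refine cl_star H v hF pq sp hmpq.1 hmsp.1
        (fun hc => (Finset.mem_erase.mp (hmpq.2.1 hc)).1 rfl)
        (fun hc => (Finset.mem_erase.mp (hmsp.2.1 hc)).1 rfl)
        ?_ hmpq.2.2 hmsp.2.2 ?_
      · refine Finset.disjoint_left.mpr (fun {t} ht hts => ?_)
        exact (hV2mem t (hL22V2 pq hpqL22 ht)).2 (hspfacts.2 hts)
      · intro x hx
        by_contra hc
        exact Finset.disjoint_left.mp hspdisj hx
          (Finset.mem_filter.mpr ⟨hspfacts.2 hx, hc⟩)
    -- constraint III: L12 is small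
    set OL12 := (V1 ×ˢ V2).filter (fun z => insert v (insert z.1 {z.2}) ∈ H.edges) with hOL12def
    have hL12le : L12.card ≤ OL12.card := by
      apply Finset.card_le_card_of_surjOn (fun z => insert z.1 {z.2})
      intro p hp
      have hpL12 : p ∈ L12 := hp
      rw [hL12def, Finset.mem_filter, hLrdef, Finset.mem_filter] at hpL12
      obtain ⟨⟨hpL, hpne⟩, hpnsub⟩ := hpL12
      obtain ⟨w, hw⟩ := Finset.nonempty_iff_ne_empty.mpr hpne
      rw [Finset.mem_inter] at hw
      obtain ⟨q, hqp, hqV1⟩ : ∃ q ∈ p, q ∉ V1 := by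
        by_contra hc
        push_neg at hc
        exact hpnsub hc
      have hwq : w ≠ q := fun h => hqV1 (h ▸ hw.2)
      have hqV2 : q ∈ V2 := by
        rw [hV2def, Finset.mem_sdiff]
        exact ⟨(hLmem p hpL).2.1 hqp, hqV1⟩
      have hrep : insert w {q} = p := by
        apply Finset.eq_of_subset_of_card_le
        · intro t ht
          simp only [Finset.mem_insert, Finset.mem_singleton] at ht
          rcases ht with rfl | rfl
          exacts [hw.1, hqp]
        · rw [(hLmem p hpL).1, Finset.card_insert_of_notMem (by simp [hwq]),
            Finset.card_singleton]
      refine ⟨(w, q), ?_, hrep⟩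
      have : (w, q) ∈ OL12 := by
        rw [hOL12def, Finset.mem_filter, Finset.mem_product]
        refine ⟨⟨hw.2, hqV2⟩, ?_⟩
        rw [hrep]
        exact (hLmem p hpL).2.2
      exact this
    have hinner : ∀ w ∈ V1,
        ((V2 ×ˢ V2).filter (fun z => z.2 ≠ z.1 ∧ insert z.2 (insert w {z.1}) ∉ H.edges)).card
        ≤ 2 * (((V2.powersetCard 2).filter fun p => insert w p ∉ H.edges).card) := by
      intro w hw
      have himg : ((V2 ×ˢ V2).filter
            (fun z => z.2 ≠ z.1 ∧ insert z.2 (insert w {z.1}) ∉ H.edges)).image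
            (fun z => insert z.1 {z.2})
          ⊆ (V2.powersetCard 2).filter fun p => insert w p ∉ H.edges := by
        intro b hb
        obtain ⟨⟨q, t⟩, hqt, rfl⟩ := Finset.mem_image.mp hb
        rw [Finset.mem_filter, Finset.mem_product] at hqt
        obtain ⟨⟨hqV, htV⟩, htq, hne⟩ := hqt
        rw [Finset.mem_filter, Finset.mem_powersetCard]
        refine ⟨⟨?_, ?_⟩, ?_⟩
        · intro u hu
          simp only [Finset.mem_insert, Finset.mem_singleton] at hu
          rcases hu with rfl | rfl <;> assumption
        · rw [Finset.card_insert_of_notMem (by simp [Ne.symm htq]), Finset.card_singleton]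
        · intro hc
          apply hne
          have hEq : insert t (insert w ({q} : Finset ℕ)) = insert w (insert q {t}) := by
            ext u; simp; tauto
          rw [hEq]
          exact hc
      have hfib : ∀ b : Finset ℕ, b ∈ ((V2 ×ˢ V2).filter
            (fun z => z.2 ≠ z.1 ∧ insert z.2 (insert w {z.1}) ∉ H.edges)).image
            (fun z => insert z.1 {z.2}) →
          (((V2 ×ˢ V2).filter
            (fun z => z.2 ≠ z.1 ∧ insert z.2 (insert w {z.1}) ∉ H.edges)).filter
            (fun z => insert z.1 {z.2} = b)).card ≤ 2 := by
        intro b hb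
        obtain ⟨⟨q0, t0⟩, hqt0, rfl⟩ := Finset.mem_image.mp hb
        have hsub2 : (((V2 ×ˢ V2).filter
            (fun z => z.2 ≠ z.1 ∧ insert z.2 (insert w {z.1}) ∉ H.edges)).filter
            (fun z => insert z.1 {z.2} = (insert q0 {t0} : Finset ℕ)))
            ⊆ {(q0, t0), (t0, q0)} := by
          intro z hz
          rw [Finset.mem_filter, Finset.mem_filter] at hz
          obtain ⟨⟨-, hne, -⟩, hzeq⟩ := hz
          have hz1 : z.1 ∈ insert q0 ({t0} : Finset ℕ) := hzeq ▸ Finset.mem_insert_self _ _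
          have hz2 : z.2 ∈ insert q0 ({t0} : Finset ℕ) :=
            hzeq ▸ (by simp : z.2 ∈ insert z.1 ({z.2} : Finset ℕ))
          simp only [Finset.mem_insert, Finset.mem_singleton] at hz1 hz2
          simp only [Finset.mem_insert, Finset.mem_singleton]
          rcases hz1 with h1 | h1 <;> rcases hz2 with h2 | h2
          · exact absurd (h2.trans h1.symm) hne
          · left; exact Prod.ext h1 h2
          · right; exact Prod.ext h1 h2
          · exact absurd (h2.trans h1.symm) hne
        calc _ ≤ ({(q0, t0), (t0, q0)} : Finset (ℕ × ℕ)).card := Finset.card_le_card hsub2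
          _ ≤ 2 := (Finset.card_insert_le _ _).trans (by simp)
      calc ((V2 ×ˢ V2).filter
            (fun z => z.2 ≠ z.1 ∧ insert z.2 (insert w {z.1}) ∉ H.edges)).card
          ≤ 2 * (((V2 ×ˢ V2).filter
            (fun z => z.2 ≠ z.1 ∧ insert z.2 (insert w {z.1}) ∉ H.edges)).image
            (fun z => insert z.1 {z.2})).card := Finset.card_le_mul_card_image _ 2 hfib
        _ ≤ 2 * (((V2.powersetCard 2).filter fun p => insert w p ∉ H.edges).card) :=
            Nat.mul_le_mul_left 2 (Finset.card_le_card himg)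
    have hsum3 : (∑ z ∈ V1 ×ˢ V2,
          ((V2.filter fun t => t ≠ z.2 ∧ insert t (insert z.1 {z.2}) ∉ H.edges).card : ℝ))
        ≤ (V1.card:ℝ) * (4*η^2*((H.verts.card:ℝ)-1)^2) := by
      rw [Finset.sum_product]
      have hstep : ∀ w ∈ V1, (∑ q ∈ V2,
          ((V2.filter fun t => t ≠ q ∧ insert t (insert w {q}) ∉ H.edges).card : ℝ))
          ≤ 4*η^2*((H.verts.card:ℝ)-1)^2 := by
        intro w hw
        have h1 : (∑ q ∈ V2,
            (V2.filter fun t => t ≠ q ∧ insert t (insert w {q}) ∉ H.edges).card)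
            = ((V2 ×ˢ V2).filter
              (fun z => z.2 ≠ z.1 ∧ insert z.2 (insert w {z.1}) ∉ H.edges)).card := by
          rw [prod_filter_card V2 V2 (fun q t => t ≠ q ∧ insert t (insert w {q}) ∉ H.edges)]
        have h2 := hinner w hw
        have h3 : (∑ q ∈ V2,
            ((V2.filter fun t => t ≠ q ∧ insert t (insert w {q}) ∉ H.edges).card : ℝ))
            ≤ 2 * (((V2.powersetCard 2).filter fun p => insert w p ∉ H.edges).card : ℝ) := by
          have h4 : (∑ q ∈ V2,
              (V2.filter fun t => t ≠ q ∧ insert t (insert w {q}) ∉ H.edges).card)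
              ≤ 2 * (((V2.powersetCard 2).filter fun p => insert w p ∉ H.edges).card) := by
            rw [h1]; exact h2
          have := Nat.cast_le (α := ℝ) |>.mpr h4
          push_cast at this
          exact this
        have h5 := hMis2 w hw
        linarith
      calc (∑ w ∈ V1, ∑ q ∈ V2,
            ((V2.filter fun t => t ≠ q ∧ insert t (insert w {q}) ∉ H.edges).card : ℝ))
          ≤ ∑ _w ∈ V1, 4*η^2*((H.verts.card:ℝ)-1)^2 := Finset.sum_le_sum hstep
        _ = (V1.card:ℝ) * (4*η^2*((H.verts.card:ℝ)-1)^2) := by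
            rw [Finset.sum_const, nsmul_eq_mul]
    set badIII := (V1 ×ˢ V2).filter (fun z => η*((H.verts.card:ℝ)-1)
        ≤ ((V2.filter fun t => t ≠ z.2 ∧ insert t (insert z.1 {z.2}) ∉ H.edges).card : ℝ))
      with hbadIIIdef
    have hbadIII : (badIII.card : ℝ) * (η*((H.verts.card:ℝ)-1))
        ≤ (V1.card:ℝ) * (4*η^2*((H.verts.card:ℝ)-1)^2) := by
      have h1 : (badIII.card : ℕ) • (η*((H.verts.card:ℝ)-1))
          ≤ ∑ z ∈ badIII,
            ((V2.filter fun t => t ≠ z.2 ∧ insert t (insert z.1 {z.2}) ∉ H.edges).card : ℝ) :=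
        Finset.card_nsmul_le_sum badIII _ _ (fun z hz => (Finset.mem_filter.mp hz).2)
      rw [nsmul_eq_mul] at h1
      have h2 : ∑ z ∈ badIII,
            ((V2.filter fun t => t ≠ z.2 ∧ insert t (insert z.1 {z.2}) ∉ H.edges).card : ℝ)
          ≤ ∑ z ∈ V1 ×ˢ V2,
            ((V2.filter fun t => t ≠ z.2 ∧ insert t (insert z.1 {z.2}) ∉ H.edges).card : ℝ) :=
        Finset.sum_le_sum_of_subset_of_nonneg (Finset.filter_subset _ _)
          (fun _ _ _ => Nat.cast_nonneg _)
      linarith [hsum3]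
    have hbadIIIc : (badIII.card : ℝ) ≤ 2*η*((H.verts.card:ℝ)-1)^2 := by
      have h4 : (badIII.card:ℝ) ≤ (V1.card:ℝ)*(4*η*((H.verts.card:ℝ)-1)) := by
        have heq : (V1.card:ℝ) * (4*η^2*((H.verts.card:ℝ)-1)^2)
            = ((V1.card:ℝ)*(4*η*((H.verts.card:ℝ)-1))) * (η*((H.verts.card:ℝ)-1)) := by ring
        exact le_of_mul_le_mul_right (by rw [← heq]; exact hbadIII) hposη
      have h5 := mul_le_mul_of_nonneg_right hAub (le_of_lt hposη)
      nlinarith only [h4, h5, h9, hposη, mul_nonneg (mul_nonneg (le_of_lt hη) hM1)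
        (mul_nonneg (le_of_lt hη) hM1)]
    have hL12small : (L12.card : ℝ) ≤ 3*η*((H.verts.card:ℝ)-1)^2 := by
      by_contra hcon
      push_neg at hcon
      have hltIII : badIII.card < OL12.card := by
        have h6 : (L12.card:ℝ) ≤ (OL12.card:ℝ) := Nat.cast_le.mpr hL12le
        have hr : (badIII.card:ℝ) < (OL12.card:ℝ) := by
          nlinarith only [hbadIIIc, hcon, h6, k1, hM1, hη]
        exact_mod_cast hr
      have hexz : ∃ z ∈ OL12, z ∉ badIII := by
        by_contra hc
        push_neg at hc
        exact absurd (Finset.card_le_card (fun z hz => hc z hz)) (not_le.mpr hltIII)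
      obtain ⟨⟨w, q⟩, hzO, hzbad⟩ := hexz
      have hzO' := hzO
      rw [hOL12def, Finset.mem_filter, Finset.mem_product] at hzO'
      obtain ⟨⟨hwV1, hqV2⟩, hedge⟩ := hzO'
      have hmissing : ((V2.filter fun t => t ≠ q ∧ insert t (insert w {q}) ∉ H.edges).card : ℝ)
          < η*((H.verts.card:ℝ)-1) := by
        by_contra hc
        push_neg at hc
        exact hzbad (by rw [hbadIIIdef]
                        exact Finset.mem_filter.mpr ⟨Finset.mem_product.mpr ⟨hwV1, hqV2⟩, hc⟩)
      have htouch : (L22.filter fun p => ¬ Disjoint p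
            (insert q (V2.filter fun t => t ≠ q ∧ insert t (insert w {q}) ∉ H.edges))).card
          ≤ (insert q (V2.filter fun t => t ≠ q ∧ insert t (insert w {q}) ∉ H.edges)).card
            * (H.verts.erase v).card := by
        apply touch_card
        intro p hp
        have hm := hLmem p (Finset.filter_subset _ _ hp)
        exact ⟨hm.1, hm.2.1⟩
      have hMQc : ((insert q (V2.filter fun t => t ≠ q ∧ insert t (insert w {q}) ∉ H.edges)).card : ℝ)
          ≤ η*((H.verts.card:ℝ)-1) + 1 := by
        have h7 := Finset.card_insert_le q (V2.filter fun t => t ≠ q ∧ insert t (insert w {q}) ∉ H.edges)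
        have h8 := Nat.cast_le (α := ℝ) |>.mpr h7
        push_cast at h8
        linarith [hmissing]
      have hlt22 : (L22.filter fun p => ¬ Disjoint p
            (insert q (V2.filter fun t => t ≠ q ∧ insert t (insert w {q}) ∉ H.edges))).card
          < L22.card := by
        have hr1 : ((L22.filter fun p => ¬ Disjoint p
              (insert q (V2.filter fun t => t ≠ q ∧ insert t (insert w {q}) ∉ H.edges))).card : ℝ)
            ≤ ((insert q (V2.filter fun t => t ≠ q ∧ insert t (insert w {q}) ∉ H.edges)).card : ℝ)
              * ((H.verts.card:ℝ)-1) := by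
          have := Nat.cast_le (α := ℝ) |>.mpr htouch
          push_cast at this
          rw [herase, hcast] at this
          exact this
        have hr : ((L22.filter fun p => ¬ Disjoint p
              (insert q (V2.filter fun t => t ≠ q ∧ insert t (insert w {q}) ∉ H.edges))).card : ℝ)
            < (L22.card:ℝ) := by
          nlinarith only [hr1, hMQc, hcase, k1, hM1, hη,
            mul_le_mul_of_nonneg_right hMQc hM1]
        exact_mod_cast hr
      have hpos2 : 0 < (L22.filter fun p => Disjoint p
            (insert q (V2.filter fun t => t ≠ q ∧ insert t (insert w {q}) ∉ H.edges))).card := by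
        have hsp := Finset.card_filter_add_card_filter_not
          (s := L22) (p := fun p => Disjoint p
            (insert q (V2.filter fun t => t ≠ q ∧ insert t (insert w {q}) ∉ H.edges)))
        omega
      obtain ⟨sp, hsp⟩ := Finset.card_pos.mp hpos2
      rw [Finset.mem_filter] at hsp
      obtain ⟨hspL22, hspdisj⟩ := hsp
      have hmsp := hLmem sp (Finset.filter_subset _ _ hspL22)
      have hwq : w ≠ q := fun h => (hV2mem q hqV2).2 (h ▸ hwV1)
      have hwer : w ∈ H.verts.erase v := hV1sub hwV1
      have hqer : q ∈ H.verts.erase v := (hV2mem q hqV2).1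
      refine cl_star H v hF (insert w {q}) sp
        (by rw [Finset.card_insert_of_notMem (by simp [hwq]), Finset.card_singleton])
        hmsp.1 ?_ (fun hc => (Finset.mem_erase.mp (hmsp.2.1 hc)).1 rfl) ?_ hedge hmsp.2.2 ?_
      · simp only [Finset.mem_insert, Finset.mem_singleton, not_or]
        exact ⟨fun h => (Finset.mem_erase.mp hwer).1 h.symm,
          fun h => (Finset.mem_erase.mp hqer).1 h.symm⟩
      · refine Finset.disjoint_left.mpr (fun {t} ht hts => ?_)
        simp only [Finset.mem_insert, Finset.mem_singleton] at ht
        rcases ht with rfl | rfl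
        · exact (hV2mem t (hL22V2 sp hspL22 hts)).2 hwV1
        · exact Finset.disjoint_left.mp hspdisj hts (Finset.mem_insert_self _ _)
      · intro t hts
        have htV2 : t ∈ V2 := hL22V2 sp hspL22 hts
        have htMQ := Finset.disjoint_left.mp hspdisj hts
        simp only [Finset.mem_insert, not_or] at htMQ
        obtain ⟨htq, htfil⟩ := htMQ
        by_contra hc
        exact htfil (Finset.mem_filter.mpr ⟨htV2, htq, hc⟩)
    -- endgame for Case B
    rw [hD]
    have hdegr : (H.deg v : ℝ) = (L22.card:ℝ) + (L11.card:ℝ) + (L12.card:ℝ) := by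
      rw [hLdeg]
      have : L.card = L22.card + (L11.card + L12.card) := by rw [← hLrsplit]; exact hLsplit
      push_cast [this]
      ring
    nlinarith only [hdegr, hL22c, hBBle, hL11small, hL12small, k1, k2, k3, hM1, hη, hδ0, hηN]

end DensityCH
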